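/- Assume 0 ≤ λ < 1 and that there exists T ∈ ℕ with c_τ = 0 and u_τ = 0 for all τ > T. Then for every t, the λ-weighted synthetic gradient G_t^λ := (1−λ) Σ_{n=1}^{∞} λ^{n−1} G_t^{(n)} admits the series expansion G_t^λ = Σ_{n=1}^{∞} (λγ)^{n−1} c_{t+n} P(t+n,t) + (1−λ) Σ_{n=1}^{∞} λ^{n−1} γ^n u_{t+n} P(t+n,t), where all three series have only finitely many nonzero terms. -/

import Mathlib

open Finset Matrix

noncomputable section

/-- Propagator `Pfrom J a n = P(a+n, a) = J_{a+n-1} ⋯ J_a`. -/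
def Pfrom {d : ℕ} (J : ℕ → Matrix (Fin d) (Fin d) ℝ) (a : ℕ) : ℕ → Matrix (Fin d) (Fin d) ℝ
  | 0 => 1
  | n + 1 => J (a + n) * Pfrom J a n

/-- Propagator `P J b a = P(b, a) = J_{b-1} ⋯ J_a` (for `b ≥ a`). -/
def P {d : ℕ} (J : ℕ → Matrix (Fin d) (Fin d) ℝ) (b a : ℕ) : Matrix (Fin d) (Fin d) ℝ :=
  Pfrom J a (b - a)

/-- The n-step synthetic gradient `G_a^{(n)}`. -/
def Gn {d : ℕ} (γ : ℝ) (J : ℕ → Matrix (Fin d) (Fin d) ℝ) (c u : ℕ → Fin d → ℝ)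
    (a n : ℕ) : Fin d → ℝ :=
  (∑ k ∈ Finset.range n, γ ^ k • Matrix.vecMul (c (a + k + 1)) (P J (a + k + 1) a))
    + γ ^ n • Matrix.vecMul (u (a + n)) (P J (a + n) a)

/-- The interim λ-weighted synthetic gradient `G_a^{λ|H}`. -/
def GLam {d : ℕ} (γ lam : ℝ) (J : ℕ → Matrix (Fin d) (Fin d) ℝ) (c u : ℕ → Fin d → ℝ)
    (a H : ℕ) : Fin d → ℝ :=
  (1 - lam) • (∑ n ∈ Finset.range (H - a - 1), lam ^ n • Gn γ J c u a (n + 1))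
    + lam ^ (H - a - 1) • Gn γ J c u a (H - a)

/-- The modified temporal-difference error `δ'_{a,t}`. -/
def δ' {d : ℕ} (γ : ℝ) (J : ℕ → Matrix (Fin d) (Fin d) ℝ) (c u : ℕ → Fin d → ℝ)
    (a t : ℕ) : Fin d → ℝ :=
  Matrix.vecMul (c (t + 1) + γ • u (t + 1)) (P J (t + 1) a) - Matrix.vecMul (u t) (P J t a)

/-- The temporal-difference error `δ_t`. -/
def δtd {d : ℕ} (γ : ℝ) (J : ℕ → Matrix (Fin d) (Fin d) ℝ) (c u w : ℕ → Fin d → ℝ)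
    (t : ℕ) : Fin d → ℝ :=
  Matrix.vecMul (c (t + 1) + γ • u (t + 1)) (P J (t + 1) t) - w t

/-- `δ_{a,t} = δ_t P(t,a)`. -/
def δab {d : ℕ} (γ : ℝ) (J : ℕ → Matrix (Fin d) (Fin d) ℝ) (c u w : ℕ → Fin d → ℝ)
    (a t : ℕ) : Fin d → ℝ :=
  Matrix.vecMul (δtd γ J c u w t) (P J t a)

lemma key_identity {V : Type*} [AddCommGroup V] [Module ℝ V] (lam γ : ℝ) (C : ℕ → V) (T : ℕ) :
    (1 - lam) • (∑ n ∈ Finset.range T, lam ^ n • ∑ k ∈ Finset.range (n + 1), γ ^ k • C k)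
      + lam ^ T • ∑ k ∈ Finset.range T, γ ^ k • C k
    = ∑ n ∈ Finset.range T, (lam * γ) ^ n • C n := by
  induction T with
  | zero => simp
  | succ T ih =>
    simp only [Finset.sum_range_succ] at ih ⊢
    rw [← ih]
    module

/-- assuming `0 ≤ λ < 1` and that `c_τ = 0` and `u_τ = 0` for all
`τ > T`, the λ-weighted synthetic gradient `G_t^λ := (1−λ) Σ_{n=1}^∞ λ^{n−1} G_t^{(n)}`
admits the series expansion
`G_t^λ = Σ_{n=1}^∞ (λγ)^{n−1} c_{t+n} P(t+n,t) + (1−λ) Σ_{n=1}^∞ λ^{n−1} γ^n u_{t+n} P(t+n,t)`,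
where the defining series converges and the two series on the right-hand side
have only finitely many nonzero terms. -/
theorem lambda_SG_series_expansion {d : ℕ} (γ lam : ℝ) (hlam0 : 0 ≤ lam) (hlam1 : lam < 1)
    (J : ℕ → Matrix (Fin d) (Fin d) ℝ) (c u : ℕ → Fin d → ℝ)
    (T : ℕ) (hc : ∀ τ, T < τ → c τ = 0) (hu : ∀ τ, T < τ → u τ = 0) (t : ℕ) :
    Summable (fun n : ℕ => lam ^ n • Gn γ J c u t (n + 1)) ∧
    (Function.support fun n : ℕ =>
        (lam * γ) ^ n • Matrix.vecMul (c (t + n + 1)) (P J (t + n + 1) t)).Finite ∧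
    (Function.support fun n : ℕ =>
        lam ^ n • γ ^ (n + 1) • Matrix.vecMul (u (t + n + 1)) (P J (t + n + 1) t)).Finite ∧
    (1 - lam) • ∑' n : ℕ, lam ^ n • Gn γ J c u t (n + 1)
      = (∑' n : ℕ, (lam * γ) ^ n • Matrix.vecMul (c (t + n + 1)) (P J (t + n + 1) t))
        + (1 - lam) •
            ∑' n : ℕ, lam ^ n • γ ^ (n + 1) • Matrix.vecMul (u (t + n + 1)) (P J (t + n + 1) t) := by
  set C : ℕ → Fin d → ℝ := fun n => Matrix.vecMul (c (t + n + 1)) (P J (t + n + 1) t) with hC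
  set U : ℕ → Fin d → ℝ := fun n => Matrix.vecMul (u (t + n + 1)) (P J (t + n + 1) t) with hU
  have hCz : ∀ n, T ≤ n → C n = 0 := by
    intro n hn
    simp [hC, hc (t + n + 1) (by omega), Matrix.zero_vecMul]
  have hUz : ∀ n, T ≤ n → U n = 0 := by
    intro n hn
    simp [hU, hu (t + n + 1) (by omega), Matrix.zero_vecMul]
  set A : Fin d → ℝ := ∑ k ∈ Finset.range T, γ ^ k • C k with hA
  have hGnF : ∀ n : ℕ, Gn γ J c u t (n + 1)
      = (∑ k ∈ Finset.range (n + 1), γ ^ k • C k) + γ ^ (n + 1) • U n := by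
    intro n
    rfl
  have hGn : ∀ n, T ≤ n → Gn γ J c u t (n + 1) = A := by
    intro n hn
    rw [hGnF, hUz n hn, smul_zero, add_zero, hA]
    exact (Finset.sum_subset (Finset.range_subset_range.mpr (by omega))
      (fun k _ hk => by rw [hCz k (by simpa using hk), smul_zero])).symm
  have hlamne : (1 : ℝ) - lam ≠ 0 := by linarith
  -- Summability
  have hgeo : Summable (fun n : ℕ => lam ^ n) := summable_geometric_of_lt_one hlam0 hlam1
  have hsum : Summable (fun n : ℕ => lam ^ n • Gn γ J c u t (n + 1)) := by
    rw [← summable_nat_add_iff T]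
    have : (fun n : ℕ => lam ^ (n + T) • Gn γ J c u t (n + T + 1))
        = fun n : ℕ => (lam ^ T * lam ^ n) • A := by
      funext n
      rw [hGn (n + T) (by omega), pow_add, mul_comm]
    rw [this]
    exact (hgeo.mul_left _).smul_const A
  refine ⟨hsum, ?_, ?_, ?_⟩
  · exact Set.Finite.subset (Set.finite_Iio T) (fun n hn => by
      by_contra h
      simp only [Set.mem_Iio, not_lt] at h
      refine hn ?_
      show (lam * γ) ^ n • C n = 0
      rw [hCz n h, smul_zero])
  · exact Set.Finite.subset (Set.finite_Iio T) (fun n hn => by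
      by_contra h
      simp only [Set.mem_Iio, not_lt] at h
      refine hn ?_
      show lam ^ n • γ ^ (n + 1) • U n = 0
      rw [hUz n h, smul_zero, smul_zero])
  · -- the tsums
    have hRC : (∑' n : ℕ, (lam * γ) ^ n • C n) = ∑ n ∈ Finset.range T, (lam * γ) ^ n • C n :=
      tsum_eq_sum (fun n hn => by rw [hCz n (by simpa using hn), smul_zero])
    have hRU : (∑' n : ℕ, lam ^ n • γ ^ (n + 1) • U n)
        = ∑ n ∈ Finset.range T, lam ^ n • γ ^ (n + 1) • U n :=
      tsum_eq_sum (fun n hn => by rw [hUz n (by simpa using hn), smul_zero, smul_zero])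
    have hL : (∑' n : ℕ, lam ^ n • Gn γ J c u t (n + 1))
        = (∑ n ∈ Finset.range T, lam ^ n • Gn γ J c u t (n + 1))
          + (lam ^ T * (1 - lam)⁻¹) • A := by
      rw [← Summable.sum_add_tsum_nat_add T hsum]
      congr 1
      have : (fun n : ℕ => lam ^ (n + T) • Gn γ J c u t (n + T + 1))
          = fun n : ℕ => (lam ^ T * lam ^ n) • A := by
        funext n
        rw [hGn (n + T) (by omega), pow_add, mul_comm]
      rw [this, Summable.tsum_smul_const (hgeo.mul_left _), tsum_mul_left,
        tsum_geometric_of_lt_one hlam0 hlam1]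
    rw [hL, hRC, hRU, smul_add]
    have hcoef : (1 - lam) • ((lam ^ T * (1 - lam)⁻¹) • A) = lam ^ T • A := by
      rw [smul_smul]
      congr 1
      field_simp
    rw [hcoef]
    have hsplit : (∑ n ∈ Finset.range T, lam ^ n • Gn γ J c u t (n + 1))
        = (∑ n ∈ Finset.range T, lam ^ n • ∑ k ∈ Finset.range (n + 1), γ ^ k • C k)
          + ∑ n ∈ Finset.range T, lam ^ n • γ ^ (n + 1) • U n := by
      rw [← Finset.sum_add_distrib]
      exact Finset.sum_congr rfl (fun n _ => by rw [hGnF n, smul_add])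
    rw [hsplit, smul_add]
    have := key_identity lam γ C T
    rw [hA]
    abel_nf
    abel_nf at this
    linear_combination (norm := abel) this


end
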